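/- The limit as ε → 0⁺ of ∫_{{(x,y) : x² + y² < 1}} ε² √(1 − x² − y²) / ( 2(1 + ε²)^{3/2} (x² + y² + ε²) ) dx dy exists and equals 0. -/
import Mathlib


open Real MeasureTheory Filter

set_option maxHeartbeats 1000000

private lemma oneD_int : IntegrableOn (fun x : ℝ => |x| ^ (-(1:ℝ)/2)) (Set.Ioo (-1) 1) := by
  have hpos : IntegrableOn (fun x : ℝ => |x| ^ (-(1:ℝ)/2)) (Set.Ioo 0 1) := by
    have h := (intervalIntegral.integrableOn_Ioo_rpow_iff (one_pos)).2 (by norm_num : (-1:ℝ) < -1/2)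
    refine h.congr_fun (fun x hx => ?_) measurableSet_Ioo
    rw [abs_of_pos hx.1]
  have hneg : IntegrableOn (fun x : ℝ => |x| ^ (-(1:ℝ)/2)) (Set.Ioo (-1) 0) := by
    rw [← (Measure.measurePreserving_neg (volume : Measure ℝ)).integrableOn_comp_preimage
        (Homeomorph.neg ℝ).measurableEmbedding]
    simpa [Function.comp_def] using hpos
  have h0 : IntegrableOn (fun x : ℝ => |x| ^ (-(1:ℝ)/2)) ({0} : Set ℝ) := by
    rw [IntegrableOn, Measure.restrict_eq_zero.mpr (measure_singleton 0)]
    exact integrable_zero_measure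
  have := (hneg.union h0).union hpos
  refine this.mono_set ?_
  intro x hx
  rcases lt_trichotomy x 0 with h | h | h
  · exact Or.inl (Or.inl ⟨hx.1, h⟩)
  · exact Or.inl (Or.inr (by simp [h]))
  · exact Or.inr ⟨h, hx.2⟩

private lemma g_int : IntegrableOn
    (fun p : ℝ × ℝ => |p.1| ^ (-(1:ℝ)/2) * |p.2| ^ (-(1:ℝ)/2))
    {p : ℝ × ℝ | p.1 ^ 2 + p.2 ^ 2 < 1} := by
  have h : IntegrableOn (fun p : ℝ × ℝ => |p.1| ^ (-(1:ℝ)/2) * |p.2| ^ (-(1:ℝ)/2))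
      (Set.Ioo (-1:ℝ) 1 ×ˢ Set.Ioo (-1:ℝ) 1) := by
    rw [IntegrableOn, Measure.volume_eq_prod ℝ ℝ, ← Measure.prod_restrict]
    exact oneD_int.mul_prod oneD_int
  refine h.mono_set ?_
  intro p hp
  have h1 : p.1 ^ 2 < 1 := by nlinarith [sq_nonneg p.2, hp.out]
  have h2 : p.2 ^ 2 < 1 := by nlinarith [sq_nonneg p.1, hp.out]
  have h1' := abs_lt.mp ((sq_lt_one_iff_abs_lt_one p.1).mp h1)
  have h2' := abs_lt.mp ((sq_lt_one_iff_abs_lt_one p.2).mp h2)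
  exact ⟨⟨h1'.1, h1'.2⟩, ⟨h2'.1, h2'.2⟩⟩

/-- The flux of the correction term `F²_ε` of the regularized Dirac monopole curvature
through a unit hemisphere vanishes in the limit:
`∫_{x²+y²<1} ε²√(1−x²−y²)/(2(1+ε²)^{3/2}(x²+y²+ε²)) dx dy → 0` as `ε → 0⁺`. -/
theorem correction_term_flux_limit :
    Tendsto (fun ε : ℝ =>
        ∫ p in {p : ℝ × ℝ | p.1 ^ 2 + p.2 ^ 2 < 1},
          ε ^ 2 * Real.sqrt (1 - p.1 ^ 2 - p.2 ^ 2)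
            / (2 * (Real.sqrt (1 + ε ^ 2)) ^ 3 * (p.1 ^ 2 + p.2 ^ 2 + ε ^ 2)))
      (nhdsWithin 0 (Set.Ioi 0)) (nhds 0) := by
  set D : Set (ℝ × ℝ) := {p : ℝ × ℝ | p.1 ^ 2 + p.2 ^ 2 < 1} with hD
  set g : ℝ × ℝ → ℝ := fun p => |p.1| ^ (-(1:ℝ)/2) * |p.2| ^ (-(1:ℝ)/2) with hg
  set C : ℝ := ∫ p in D, g p with hC
  -- a.e. both coordinates nonzero
  have hax : (volume : Measure (ℝ × ℝ)) {p : ℝ × ℝ | p.1 = 0} = 0 := by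
    have : {p : ℝ × ℝ | p.1 = 0} = ({0} : Set ℝ) ×ˢ (Set.univ : Set ℝ) := by
      ext p; simp [Set.mem_prod, Prod.ext_iff, eq_comm]
    rw [this, Measure.volume_eq_prod ℝ ℝ, Measure.prod_prod]
    simp
  have hay : (volume : Measure (ℝ × ℝ)) {p : ℝ × ℝ | p.2 = 0} = 0 := by
    have : {p : ℝ × ℝ | p.2 = 0} = (Set.univ : Set ℝ) ×ˢ ({0} : Set ℝ) := by
      ext p; simp [Set.mem_prod, Prod.ext_iff, eq_comm]
    rw [this, Measure.volume_eq_prod ℝ ℝ, Measure.prod_prod]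
    simp
  -- key bound
  have key : ∀ ε : ℝ, 0 < ε →
      ‖∫ p in D, ε ^ 2 * Real.sqrt (1 - p.1 ^ 2 - p.2 ^ 2)
        / (2 * (Real.sqrt (1 + ε ^ 2)) ^ 3 * (p.1 ^ 2 + p.2 ^ 2 + ε ^ 2))‖
      ≤ ε / 4 * C := by
    intro ε hε
    have hgi : Integrable (fun p => ε / 4 * g p) (volume.restrict D) :=
      (g_int.const_mul (ε / 4))
    have hbound : ∀ᵐ p ∂(volume.restrict D),
        ‖ε ^ 2 * Real.sqrt (1 - p.1 ^ 2 - p.2 ^ 2)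
          / (2 * (Real.sqrt (1 + ε ^ 2)) ^ 3 * (p.1 ^ 2 + p.2 ^ 2 + ε ^ 2))‖
        ≤ ε / 4 * g p := by
      filter_upwards [ae_restrict_of_ae (measure_eq_zero_iff_ae_notMem.mp hax),
        ae_restrict_of_ae (measure_eq_zero_iff_ae_notMem.mp hay)] with p hx hy
      have hx0 : p.1 ≠ 0 := hx
      have hy0 : p.2 ≠ 0 := hy
      set u : ℝ := |p.1| ^ ((1:ℝ)/2) with hu
      set v : ℝ := |p.2| ^ ((1:ℝ)/2) with hv
      have hupos : 0 < u := Real.rpow_pos_of_pos (abs_pos.mpr hx0) _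
      have hvpos : 0 < v := Real.rpow_pos_of_pos (abs_pos.mpr hy0) _
      have hu2 : u ^ 2 = |p.1| := by
        rw [hu, ← Real.rpow_natCast (|p.1| ^ ((1:ℝ)/2)) 2, ← Real.rpow_mul (abs_nonneg _)]
        norm_num
      have hv2 : v ^ 2 = |p.2| := by
        rw [hv, ← Real.rpow_natCast (|p.2| ^ ((1:ℝ)/2)) 2, ← Real.rpow_mul (abs_nonneg _)]
        norm_num
      have hgp : g p = (u * v)⁻¹ := by
        rw [hg]
        simp only [neg_div]
        rw [Real.rpow_neg (abs_nonneg _), Real.rpow_neg (abs_nonneg _), ← mul_inv]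
      set s : ℝ := p.1 ^ 2 + p.2 ^ 2 with hs
      have hspos : 0 < s := by
        have h1 := abs_pos.mpr hx0
        nlinarith [sq_abs p.1, sq_nonneg p.2]
      have huvs : u * v ≤ Real.sqrt s := by
        rw [show u * v = Real.sqrt ((u*v)^2) from (Real.sqrt_sq (by positivity)).symm]
        apply Real.sqrt_le_sqrt
        have : (u*v)^2 = |p.1| * |p.2| := by rw [mul_pow, hu2, hv2]
        rw [this]
        nlinarith [sq_abs p.1, sq_abs p.2, sq_nonneg (|p.1| - |p.2|)]
      have hsq1 : Real.sqrt (1 - p.1 ^ 2 - p.2 ^ 2) ≤ 1 := by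
        rw [Real.sqrt_le_one]; nlinarith [sq_nonneg p.1, sq_nonneg p.2]
      have hA : 1 ≤ (Real.sqrt (1 + ε ^ 2)) ^ 3 := by
        have h1 : 1 ≤ Real.sqrt (1 + ε ^ 2) := by
          rw [Real.one_le_sqrt]; nlinarith
        exact one_le_pow₀ h1
      have hsqrts : 0 < Real.sqrt s := Real.sqrt_pos.mpr hspos
      have hssq : Real.sqrt s ^ 2 = s := Real.sq_sqrt hspos.le
      have hnorm : ‖ε ^ 2 * Real.sqrt (1 - p.1 ^ 2 - p.2 ^ 2)
          / (2 * (Real.sqrt (1 + ε ^ 2)) ^ 3 * (s + ε ^ 2))‖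
          = ε ^ 2 * Real.sqrt (1 - p.1 ^ 2 - p.2 ^ 2)
          / (2 * (Real.sqrt (1 + ε ^ 2)) ^ 3 * (s + ε ^ 2)) := by
        rw [Real.norm_eq_abs, abs_of_nonneg]
        positivity
      rw [hnorm, hgp]
      have step1 : ε ^ 2 * Real.sqrt (1 - p.1 ^ 2 - p.2 ^ 2)
          / (2 * (Real.sqrt (1 + ε ^ 2)) ^ 3 * (s + ε ^ 2))
          ≤ ε ^ 2 / (2 * (s + ε ^ 2)) := by
        apply div_le_div₀ (by positivity)
        · nlinarith [Real.sqrt_nonneg (1 - p.1 ^ 2 - p.2 ^ 2), sq_nonneg ε]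
        · positivity
        · nlinarith [sq_nonneg ε]
      have step2 : ε ^ 2 / (2 * (s + ε ^ 2)) ≤ ε / 4 * (u * v)⁻¹ := by
        have hr : ε / 4 * (u * v)⁻¹ = ε / (4 * (u * v)) := by
          field_simp
        rw [hr, div_le_div_iff₀ (by positivity) (by positivity)]
        have ha := mul_le_mul_of_nonneg_left huvs (by positivity : (0:ℝ) ≤ 2 * ε)
        have hb : 2 * ε * Real.sqrt s ≤ s + ε ^ 2 := by
          nlinarith [sq_nonneg (Real.sqrt s - ε), hssq]
        have hc := le_trans ha hb
        nlinarith [mul_le_mul_of_nonneg_left hc (by positivity : (0:ℝ) ≤ 2 * ε)]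
      linarith
    calc ‖∫ p in D, ε ^ 2 * Real.sqrt (1 - p.1 ^ 2 - p.2 ^ 2)
        / (2 * (Real.sqrt (1 + ε ^ 2)) ^ 3 * (p.1 ^ 2 + p.2 ^ 2 + ε ^ 2))‖
        ≤ ∫ p in D, ε / 4 * g p := norm_integral_le_of_norm_le hgi hbound
      _ = ε / 4 * C := by rw [hC, ← integral_const_mul]
  -- conclude by squeezing
  have hC0 : 0 ≤ C := by
    apply integral_nonneg; intro p; positivity
  apply squeeze_zero_norm' (a := fun ε => ε / 4 * C)
  · filter_upwards [self_mem_nhdsWithin] with ε hε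
    exact key ε hε
  · have : Tendsto (fun ε : ℝ => ε / 4 * C) (nhds 0) (nhds 0) := by
      have hcont : Continuous (fun ε : ℝ => ε / 4 * C) := by continuity
      have := hcont.tendsto (0:ℝ)
      simpa using this
    exact this.mono_left nhdsWithin_le_nhds
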